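/- The derivative of the complete elliptic integral of the first kind satisfies dK/dk = E(k)/(k(1-k^2)) - K(k)/k for 0 < k < 1, where K(k) = ∫₀^{π/2} dt/√(1-k²sin²t) and E(k) = ∫₀^{π/2} √(1-k²sin²t) dt. -/

import Mathlib

open Real

/-- Complete elliptic integral of the first kind. -/
noncomputable def Kel (k : ℝ) : ℝ :=
  ∫ t in (0:ℝ)..(Real.pi / 2), 1 / Real.sqrt (1 - k ^ 2 * Real.sin t ^ 2)

/-- Complete elliptic integral of the second kind. -/
noncomputable def Eel (k : ℝ) : ℝ :=
  ∫ t in (0:ℝ)..(Real.pi / 2), Real.sqrt (1 - k ^ 2 * Real.sin t ^ 2)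

private lemma denom_pos {x : ℝ} (t : ℝ) (hx : |x| < 1) :
    0 < 1 - x ^ 2 * Real.sin t ^ 2 := by
  have h1 : x ^ 2 < 1 := by nlinarith [abs_nonneg x, sq_abs x]
  nlinarith [Real.sin_sq_le_one t, sq_nonneg x, sq_nonneg (Real.sin t)]

private lemma sqrt_denom_pos {x : ℝ} (t : ℝ) (hx : |x| < 1) :
    0 < Real.sqrt (1 - x ^ 2 * Real.sin t ^ 2) :=
  Real.sqrt_pos.mpr (denom_pos t hx)

private lemma cont_sqrt {x : ℝ} : Continuous fun t => Real.sqrt (1 - x ^ 2 * Real.sin t ^ 2) := by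
  fun_prop

/-- pointwise derivative in the parameter -/
private lemma hasDerivAt_param (s x : ℝ) (hx : |x| < 1) (hs : s ^ 2 ≤ 1) :
    HasDerivAt (fun y : ℝ => 1 / Real.sqrt (1 - y ^ 2 * s ^ 2))
      (x * s ^ 2 / Real.sqrt (1 - x ^ 2 * s ^ 2) ^ 3) x := by
  have hs : s ^ 2 ≤ 1 := hs
  have h1 : x ^ 2 < 1 := by nlinarith [abs_nonneg x, sq_abs x]
  have hu : 0 < 1 - x ^ 2 * s ^ 2 := by nlinarith [sq_nonneg x, sq_nonneg s]
  have hΔ : 0 < Real.sqrt (1 - x ^ 2 * s ^ 2) := Real.sqrt_pos.mpr hu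
  have h2 : HasDerivAt (fun y : ℝ => 1 - y ^ 2 * s ^ 2) (-(2 * x * s ^ 2)) x := by
    simpa using ((hasDerivAt_pow 2 x).mul_const (s ^ 2)).const_sub 1
  have h3 := (h2.sqrt hu.ne').inv hΔ.ne'
  simp only [one_div]
  refine HasDerivAt.congr_deriv h3 ?_
  have hsq : Real.sqrt (1 - x ^ 2 * s ^ 2) ^ 2 = 1 - x ^ 2 * s ^ 2 := Real.sq_sqrt hu.le
  have hcube : Real.sqrt (1 - x ^ 2 * s ^ 2) ^ 3
      = (1 - x ^ 2 * s ^ 2) * Real.sqrt (1 - x ^ 2 * s ^ 2) := by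
    rw [show Real.sqrt (1 - x ^ 2 * s ^ 2) ^ 3
        = Real.sqrt (1 - x ^ 2 * s ^ 2) ^ 2 * Real.sqrt (1 - x ^ 2 * s ^ 2) from by ring, hsq]
  rw [hcube]
  field_simp
  rw [hsq]

private lemma alg_id (k s c d : ℝ) (hk0 : 0 < k) (hk2 : 0 < 1 - k ^ 2) (hd : 0 < d)
    (h2 : d ^ 2 = 1 - k ^ 2 * s ^ 2) (hpyth : s ^ 2 + c ^ 2 = 1) :
    k * s ^ 2 / d ^ 3 - (d / (k * (1 - k ^ 2)) - 1 / d / k) =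
    -(k / (1 - k ^ 2)) * (((c * c + s * -s) * d - s * c * (-(k ^ 2 * (2 * s * c)) / (2 * d))) / d ^ 2) := by
  have hdne : d ≠ 0 := hd.ne'
  have hkne : k ≠ 0 := hk0.ne'
  have h2ne : (1 - k ^ 2) ≠ 0 := hk2.ne'
  field_simp
  linear_combination (-(d^2+k^2*s^2)) * h2
    + (k^2*d^2+k^4*s^2) * hpyth

set_option maxHeartbeats 1000000 in
private lemma step1 (k : ℝ) (hk0 : 0 < k) (hk1 : k < 1) :
    HasDerivAt Kel
      (∫ t in (0:ℝ)..(Real.pi / 2),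
        k * Real.sin t ^ 2 / Real.sqrt (1 - k ^ 2 * Real.sin t ^ 2) ^ 3) k := by
  set m : ℝ := (1 + k) / 2 with hm
  have hm0 : 0 < m := by positivity
  have hm1 : m < 1 := by simp only [hm]; linarith
  have hmm : 0 < 1 - m ^ 2 := by nlinarith
  have hε : (0:ℝ) < (1 - k) / 2 := by linarith
  have hball : ∀ x ∈ Metric.ball k ((1 - k) / 2), |x| < m := by
    intro x hx
    rw [Metric.mem_ball, Real.dist_eq] at hx
    calc |x| = |k + (x - k)| := by ring_nf
    _ ≤ |k| + |x - k| := abs_add_le _ _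
    _ < k + (1 - k) / 2 := by rw [abs_of_pos hk0]; linarith
    _ = m := by simp only [hm]; ring
  have key := intervalIntegral.hasDerivAt_integral_of_dominated_loc_of_deriv_le
    (μ := MeasureTheory.volume) (a := 0) (b := Real.pi / 2) (x₀ := k)
    (F := fun x t => 1 / Real.sqrt (1 - x ^ 2 * Real.sin t ^ 2))
    (F' := fun x t => x * Real.sin t ^ 2 / Real.sqrt (1 - x ^ 2 * Real.sin t ^ 2) ^ 3)
    (bound := fun _ => m / Real.sqrt (1 - m ^ 2) ^ 3) (Metric.ball_mem_nhds k hε) ?_ ?_ ?_ ?_ ?_ ?_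
  · exact key.2
  · filter_upwards with x
    exact (measurable_const.div (cont_sqrt (x := x)).measurable).aestronglyMeasurable
  · have habs : |k| < 1 := by rw [abs_of_pos hk0]; exact hk1
    exact (Continuous.intervalIntegrable
      (continuous_const.div cont_sqrt fun t => (sqrt_denom_pos t habs).ne') _ _)
  · have habs : |k| < 1 := by rw [abs_of_pos hk0]; exact hk1
    exact ((continuous_const.mul (Real.continuous_sin.pow 2)).div (cont_sqrt.pow 3)
      fun t => pow_ne_zero 3 (sqrt_denom_pos t habs).ne').aestronglyMeasurable
  · filter_upwards with t _ x hx
    have hxm : |x| < m := hball x hx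
    have hx1 : |x| < 1 := hxm.trans hm1
    have hs : Real.sin t ^ 2 ≤ 1 := Real.sin_sq_le_one t
    have hden : 1 - m ^ 2 ≤ 1 - x ^ 2 * Real.sin t ^ 2 := by
      nlinarith [sq_abs x, sq_nonneg (Real.sin t), abs_nonneg x]
    have hD : Real.sqrt (1 - m ^ 2) ≤ Real.sqrt (1 - x ^ 2 * Real.sin t ^ 2) :=
      Real.sqrt_le_sqrt hden
    have hDm : 0 < Real.sqrt (1 - m ^ 2) := Real.sqrt_pos.mpr hmm
    have hD3 : Real.sqrt (1 - m ^ 2) ^ 3 ≤ Real.sqrt (1 - x ^ 2 * Real.sin t ^ 2) ^ 3 :=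
      pow_le_pow_left₀ hDm.le hD 3
    have hnum : |x * Real.sin t ^ 2| ≤ m := by
      rw [abs_mul, abs_of_nonneg (sq_nonneg (Real.sin t))]
      calc |x| * Real.sin t ^ 2 ≤ m * 1 := by
            apply mul_le_mul hxm.le hs (sq_nonneg _) hm0.le
      _ = m := mul_one m
    rw [Real.norm_eq_abs, abs_div,
      abs_of_nonneg (pow_nonneg (Real.sqrt_nonneg _) 3)]
    exact div_le_div₀ hm0.le hnum (pow_pos hDm 3) hD3
  · exact intervalIntegrable_const
  · filter_upwards with t _ x hx
    exact hasDerivAt_param (Real.sin t) x ((hball x hx).trans hm1) (Real.sin_sq_le_one t)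

private lemma step2 (k : ℝ) (hk0 : 0 < k) (hk1 : k < 1) :
    (∫ t in (0:ℝ)..(Real.pi / 2),
        k * Real.sin t ^ 2 / Real.sqrt (1 - k ^ 2 * Real.sin t ^ 2) ^ 3)
      = Eel k / (k * (1 - k ^ 2)) - Kel k / k := by
  have habs : |k| < 1 := by rw [abs_of_pos hk0]; exact hk1
  have hk2 : 0 < 1 - k ^ 2 := by nlinarith
  set Δ : ℝ → ℝ := fun t => Real.sqrt (1 - k ^ 2 * Real.sin t ^ 2) with hΔdef
  have hupos : ∀ t, 0 < 1 - k ^ 2 * Real.sin t ^ 2 := fun t => denom_pos t habs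
  have hΔpos : ∀ t, 0 < Δ t := fun t => sqrt_denom_pos t habs
  have hsq : ∀ t, Δ t ^ 2 = 1 - k ^ 2 * Real.sin t ^ 2 :=
    fun t => Real.sq_sqrt (hupos t).le
  have hΔcont : Continuous Δ := cont_sqrt
  set f₁ : ℝ → ℝ := fun t => k * Real.sin t ^ 2 / Δ t ^ 3 with hf₁
  set f₂ : ℝ → ℝ := fun t => Δ t / (k * (1 - k ^ 2)) - (1 / Δ t) / k with hf₂
  set G : ℝ → ℝ := fun t => -(k / (1 - k ^ 2)) * (Real.sin t * Real.cos t / Δ t) with hG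
  have hGder : ∀ t, HasDerivAt G (f₁ t - f₂ t) t := by
    intro t
    have hs := Real.hasDerivAt_sin t
    have hc := Real.hasDerivAt_cos t
    have hnum : HasDerivAt (fun t => Real.sin t * Real.cos t)
        (Real.cos t * Real.cos t + Real.sin t * -Real.sin t) t := hs.mul hc
    have hin : HasDerivAt (fun t => 1 - k ^ 2 * Real.sin t ^ 2)
        (-(k ^ 2 * (2 * Real.sin t * Real.cos t))) t := by
      have := (hs.pow 2).const_mul (k ^ 2)
      simpa [mul_comm, mul_assoc, mul_left_comm] using this.const_sub 1
    have hΔder := hin.sqrt (hupos t).ne'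
    have hquot := hnum.div hΔder (hΔpos t).ne'
    have hG' := hquot.const_mul (-(k / (1 - k ^ 2)))
    refine HasDerivAt.congr_deriv hG' ?_
    exact Eq.symm <| alg_id k (Real.sin t) (Real.cos t) (Δ t) hk0 hk2 (hΔpos t) (hsq t)
      (Real.sin_sq_add_cos_sq t)
  have hf₁cont : Continuous f₁ :=
    (continuous_const.mul (Real.continuous_sin.pow 2)).div (hΔcont.pow 3)
      (fun t => pow_ne_zero 3 (hΔpos t).ne')
  have hf₂cont : Continuous f₂ :=
    ((hΔcont.div_const _)).sub
      ((continuous_const.div hΔcont fun t => (hΔpos t).ne').div_const _)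
  have hint₁ : IntervalIntegrable f₁ MeasureTheory.volume 0 (Real.pi / 2) :=
    hf₁cont.intervalIntegrable _ _
  have hint₂ : IntervalIntegrable f₂ MeasureTheory.volume 0 (Real.pi / 2) :=
    hf₂cont.intervalIntegrable _ _
  have hzero : (∫ t in (0:ℝ)..(Real.pi / 2), (f₁ t - f₂ t)) = 0 := by
    rw [intervalIntegral.integral_eq_sub_of_hasDerivAt (fun t _ => hGder t)
      ((hf₁cont.sub hf₂cont).intervalIntegrable _ _)]
    simp [hG, Real.cos_pi_div_two, Real.sin_zero]
  have heq : (∫ t in (0:ℝ)..(Real.pi / 2), f₁ t) = ∫ t in (0:ℝ)..(Real.pi / 2), f₂ t := by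
    have := intervalIntegral.integral_sub hint₁ hint₂
    rw [this] at hzero
    linarith
  calc (∫ t in (0:ℝ)..(Real.pi / 2),
        k * Real.sin t ^ 2 / Real.sqrt (1 - k ^ 2 * Real.sin t ^ 2) ^ 3)
      = ∫ t in (0:ℝ)..(Real.pi / 2), f₁ t := rfl
    _ = ∫ t in (0:ℝ)..(Real.pi / 2), f₂ t := heq
    _ = (∫ t in (0:ℝ)..(Real.pi / 2), Δ t / (k * (1 - k ^ 2)))
        - ∫ t in (0:ℝ)..(Real.pi / 2), (1 / Δ t) / k := by
        apply intervalIntegral.integral_sub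
        · exact (hΔcont.div_const _).intervalIntegrable _ _
        · exact ((continuous_const.div hΔcont fun t => (hΔpos t).ne').div_const _).intervalIntegrable _ _
    _ = Eel k / (k * (1 - k ^ 2)) - Kel k / k := by
        rw [intervalIntegral.integral_div, intervalIntegral.integral_div]
        rfl

theorem deriv_Kel (k : ℝ) (hk0 : 0 < k) (hk1 : k < 1) :
    HasDerivAt Kel (Eel k / (k * (1 - k ^ 2)) - Kel k / k) k := by
  have h := step1 k hk0 hk1
  rwa [step2 k hk0 hk1] at h
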